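/- Let k be a natural number, let δ be a rational number and let u₀,…,u_k be rational numbers (extended by the convention u_t = 0 for t < 0). For each 0 ≤ m ≤ k set b_m := (1/2)·(δ² − Σ_{i=0}^{m} C(2m+1, m−i) · Σ_{j=0}^{k−m} C(k−m, j) · u_{i−j}), and set Δ := (1/2)·(4^k·δ² − Σ_{i=0}^{k} C(2k+1, k−i) · 2^{k−i} · u_i). Then Δ = Σ_{m=0}^{k} C(2k+1, k−m) · b_m. -/

import Mathlib

open Finset

-- Step 1: inner double sum via Vandermonde
lemma aux1 (k m : ℕ) (hm : m ≤ k) (u : ℤ → ℚ) (hu : ∀ t : ℤ, t < 0 → u t = 0) :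
    ∑ i ∈ Finset.range (m+1), ((2*m+1).choose (m-i) : ℚ) *
      ∑ j ∈ Finset.range (k-m+1), ((k-m).choose j : ℚ) * u ((i:ℤ)-(j:ℤ))
  = ∑ t ∈ Finset.range (m+1), ((k+m+1).choose (m-t) : ℚ) * u t := by
  -- rewrite LHS as sigma sum over j ≤ i
  have hL : ∀ i ∈ Finset.range (m+1),
      ((2*m+1).choose (m-i) : ℚ) *
        ∑ j ∈ Finset.range (k-m+1), ((k-m).choose j : ℚ) * u ((i:ℤ)-(j:ℤ))
      = ∑ j ∈ Finset.range (i+1),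
          ((2*m+1).choose (m-i) : ℚ) * (((k-m).choose j : ℚ) * u ((i:ℤ)-(j:ℤ))) := by
    intro i hi
    rw [Finset.mul_sum]
    have h1 : ∑ j ∈ Finset.range (k-m+1),
        ((2*m+1).choose (m-i) : ℚ) * (((k-m).choose j : ℚ) * u ((i:ℤ)-(j:ℤ)))
        = ∑ j ∈ Finset.range (k+1),
        ((2*m+1).choose (m-i) : ℚ) * (((k-m).choose j : ℚ) * u ((i:ℤ)-(j:ℤ))) := by
      apply Finset.sum_subset
      · exact Finset.range_subset_range.2 (by omega)
      · intro j hj hj'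
        simp only [Finset.mem_range] at hj hj'
        have : (k-m).choose j = 0 := Nat.choose_eq_zero_of_lt (by omega)
        simp [this]
    have h2 : ∑ j ∈ Finset.range (i+1),
        ((2*m+1).choose (m-i) : ℚ) * (((k-m).choose j : ℚ) * u ((i:ℤ)-(j:ℤ)))
        = ∑ j ∈ Finset.range (k+1),
        ((2*m+1).choose (m-i) : ℚ) * (((k-m).choose j : ℚ) * u ((i:ℤ)-(j:ℤ))) := by
      apply Finset.sum_subset
      · exact Finset.range_subset_range.2 (by simp at hi; omega)
      · intro j hj hj'
        simp only [Finset.mem_range] at hj hj'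
        have : u ((i:ℤ)-(j:ℤ)) = 0 := hu _ (by omega)
        simp [this]
    rw [h1, ← h2]
  rw [Finset.sum_congr rfl hL]
  -- rewrite RHS via Vandermonde
  have hR : ∀ t ∈ Finset.range (m+1),
      (((k+m+1).choose (m-t) : ℚ)) * u t
      = ∑ a ∈ Finset.range (m-t+1),
          ((2*m+1).choose a : ℚ) * ((k-m).choose (m-t-a) : ℚ) * u t := by
    intro t ht
    have : (k+m+1).choose (m-t) = ((2*m+1) + (k-m)).choose (m-t) := by
      congr 1; omega
    rw [this, Nat.add_choose_eq, Finset.Nat.sum_antidiagonal_eq_sum_range_succ_mk]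
    push_cast
    rw [Finset.sum_mul]
  rw [Finset.sum_congr rfl hR]
  rw [Finset.sum_sigma', Finset.sum_sigma']
  apply Finset.sum_nbij' (i := fun p => ⟨p.1 - p.2, m - p.1⟩)
    (j := fun p => ⟨m - p.2, m - p.1 - p.2⟩)
  · intro p hp
    simp only [Finset.mem_sigma, Finset.mem_range] at hp ⊢
    omega
  · intro p hp
    simp only [Finset.mem_sigma, Finset.mem_range] at hp ⊢
    omega
  · intro p hp
    obtain ⟨i, j⟩ := p
    simp only [Finset.mem_sigma, Finset.mem_range] at hp
    have hp1 : i < m + 1 := hp.1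
    have hp2 : j < i + 1 := hp.2
    clear hp
    ext <;> simp <;> omega
  · intro p hp
    obtain ⟨t, a⟩ := p
    simp only [Finset.mem_sigma, Finset.mem_range] at hp
    have hp1 : t < m + 1 := hp.1
    have hp2 : a < m - t + 1 := hp.2
    clear hp
    ext <;> simp <;> omega
  · intro p hp
    obtain ⟨i, j⟩ := p
    simp only [Finset.mem_sigma, Finset.mem_range] at hp
    have hp1 : i < m + 1 := hp.1
    have hp2 : j < i + 1 := hp.2
    clear hp
    simp only
    have h1 : m - (m - j) = j := by omega
    have h2 : m - (i - j) - (m - i) = j := by omega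
    have h3 : ((i:ℤ) - (j:ℤ)) = ((i - j : ℕ) : ℤ) := by omega
    rw [h3, h2]
    ring


lemma aux2 (k t : ℕ) (ht : t ≤ k) :
    ∑ m ∈ Finset.range (k+1),
      (2*k+1).choose (k-m) * (if t ≤ m then (k+m+1).choose (m-t) else 0)
    = (2*k+1).choose (k-t) * 2^(k-t) := by
  have h1 : ∑ m ∈ Finset.range (k+1),
      (2*k+1).choose (k-m) * (if t ≤ m then (k+m+1).choose (m-t) else 0)
    = ∑ m ∈ Finset.Ico t (k+1), (2*k+1).choose (k-m) * (k+m+1).choose (m-t) := by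
    rw [Finset.range_eq_Ico,
      ← Finset.sum_subset (Finset.Ico_subset_Ico (Nat.zero_le t) le_rfl)]
    · apply Finset.sum_congr rfl
      intro m hm
      rw [if_pos (by simp only [Finset.mem_Ico] at hm; omega)]
    · intro m hm hm'
      simp only [Finset.mem_Ico] at hm hm'
      rw [if_neg (by omega), mul_zero]
  rw [h1, Finset.sum_Ico_eq_sum_range]
  have h2 : k + 1 - t = k - t + 1 := by omega
  rw [h2, ← Nat.sum_range_choose (k-t), Finset.mul_sum,
    ← Finset.sum_range_reflect (fun j => (2*k+1).choose (k-t) * (k-t).choose j) (k-t+1)]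
  apply Finset.sum_congr rfl
  intro j hj
  simp only [Finset.mem_range] at hj
  have e1 : t + j - t = j := by omega
  have e2 : k - (t + j) = k - t - j := by omega
  have e3 : k + (t + j) + 1 = 2*k+1 - (k-t-j) := by omega
  have e5 : k - t + 1 - 1 - j = k - t - j := by omega
  rw [e1, e2, e3, e5,
    Nat.choose_mul (n := 2*k+1) (k := k-t) (s := k-t-j) (by omega)]
  congr 2
  omega

/-- The combinatorial core of the double-point formula for 2-Veronese
embeddings. `u : ℤ → ℚ` encodes the numbers `u₀,…,u_k`, extended by `u t = 0` for `t < 0`. -/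
theorem veronese_double_point_identity (k : ℕ) (δ : ℚ) (u : ℤ → ℚ)
    (hu : ∀ t : ℤ, t < 0 → u t = 0) :
    (1/2 : ℚ) * ((4 : ℚ) ^ k * δ ^ 2 -
        ∑ i ∈ Finset.range (k + 1),
          (Nat.choose (2 * k + 1) (k - i) : ℚ) * 2 ^ (k - i) * u i) =
      ∑ m ∈ Finset.range (k + 1),
        (Nat.choose (2 * k + 1) (k - m) : ℚ) *
          ((1/2 : ℚ) * (δ ^ 2 -
            ∑ i ∈ Finset.range (m + 1),
              (Nat.choose (2 * m + 1) (m - i) : ℚ) *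
                ∑ j ∈ Finset.range (k - m + 1),
                  (Nat.choose (k - m) j : ℚ) * u ((i : ℤ) - (j : ℤ)))) := by
  have hA : ∑ m ∈ Finset.range (k+1), ((2*k+1).choose (k-m) : ℚ) = 4^k := by
    have h := Nat.sum_range_choose_halfway k
    have h2 : ∑ m ∈ Finset.range (k+1), (2*k+1).choose (k-m) = 4^k := by
      rw [← h, ← Finset.sum_range_reflect (fun i => (2*k+1).choose i) (k+1)]
      apply Finset.sum_congr rfl
      intro m _
      congr 1
    exact_mod_cast congrArg (Nat.cast (R := ℚ)) h2
  have hD : ∀ m ∈ Finset.range (k+1),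
      (Nat.choose (2 * k + 1) (k - m) : ℚ) *
          ((1/2 : ℚ) * (δ ^ 2 -
            ∑ i ∈ Finset.range (m + 1),
              (Nat.choose (2 * m + 1) (m - i) : ℚ) *
                ∑ j ∈ Finset.range (k - m + 1),
                  (Nat.choose (k - m) j : ℚ) * u ((i : ℤ) - (j : ℤ))))
      = (Nat.choose (2 * k + 1) (k - m) : ℚ) *
          ((1/2 : ℚ) * (δ ^ 2 -
            ∑ t ∈ Finset.range (k + 1),
              (if t ≤ m then ((k+m+1).choose (m-t) : ℚ) else 0) * u t)) := by
    intro m hm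
    simp only [Finset.mem_range] at hm
    rw [aux1 k m (by omega) u hu]
    congr 3
    rw [← Finset.sum_subset (Finset.range_subset_range.2 (by omega : m + 1 ≤ k + 1))]
    · apply Finset.sum_congr rfl
      intro x hx
      rw [if_pos (by simp only [Finset.mem_range] at hx; omega)]
    · intro x hx hx'
      simp only [Finset.mem_range] at hx hx'
      rw [if_neg (by omega), zero_mul]
  rw [Finset.sum_congr rfl hD]
  have hB : ∀ t ∈ Finset.range (k+1),
      ∑ m ∈ Finset.range (k+1), ((2*k+1).choose (k-m) : ℚ) *
        (if t ≤ m then ((k+m+1).choose (m-t) : ℚ) else 0)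
      = ((2*k+1).choose (k-t) : ℚ) * 2^(k-t) := by
    intro t ht
    simp only [Finset.mem_range] at ht
    have h := congrArg (Nat.cast (R := ℚ)) (aux2 k t (by omega))
    push_cast [apply_ite (Nat.cast (R := ℚ))] at h
    convert h using 2
  have expand : ∀ m ∈ Finset.range (k+1),
      (Nat.choose (2 * k + 1) (k - m) : ℚ) *
          ((1/2 : ℚ) * (δ ^ 2 -
            ∑ t ∈ Finset.range (k + 1),
              (if t ≤ m then ((k+m+1).choose (m-t) : ℚ) else 0) * u t))
      = (1/2 : ℚ) * (((2*k+1).choose (k-m) : ℚ) * δ ^ 2) -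
        (1/2 : ℚ) * ∑ t ∈ Finset.range (k + 1),
          (((2*k+1).choose (k-m) : ℚ) *
            (if t ≤ m then ((k+m+1).choose (m-t) : ℚ) else 0)) * u t := by
    intro m _
    have : (((2*k+1).choose (k-m) : ℚ)) *
        (∑ t ∈ Finset.range (k + 1),
          (if t ≤ m then ((k+m+1).choose (m-t) : ℚ) else 0) * u t)
        = ∑ t ∈ Finset.range (k + 1),
          (((2*k+1).choose (k-m) : ℚ) *
            (if t ≤ m then ((k+m+1).choose (m-t) : ℚ) else 0)) * u t := by
      rw [Finset.mul_sum]
      exact Finset.sum_congr rfl fun t _ => by ring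
    rw [← this]
    ring
  rw [Finset.sum_congr rfl expand, Finset.sum_sub_distrib, ← Finset.mul_sum,
    ← Finset.sum_mul, hA, ← Finset.mul_sum, Finset.sum_comm]
  rw [Finset.sum_congr rfl (fun t ht =>
    show (∑ m ∈ Finset.range (k+1),
        (((2*k+1).choose (k-m) : ℚ) *
          (if t ≤ m then ((k+m+1).choose (m-t) : ℚ) else 0)) * u t)
      = (((2*k+1).choose (k-t) : ℚ) * 2^(k-t)) * u t from by
    rw [← Finset.sum_mul, hB t ht])]
  rw [mul_sub]
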